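/- Let φ_1 : M × N → K be a left non-degenerate bilinear map of vector spaces. Then for each i ≥ 1, the bilinear map φ_1^{⊗i} : M^{⊗i} × N^{⊗i} → K defined by φ_1^{⊗i}(m^1 ⊗ ⋯ ⊗ m^i, n^1 ⊗ ⋯ ⊗ n^i) = ∏_{r=1}^i φ_1(m^r, n^r) is left non-degenerate. -/

import Mathlib

open TensorProduct PiTensorProduct

variable (K : Type) [Field K]

section Aux

variable {K}

/-- From a finite linearly independent family of functionals, extract a vector
dual to one of them. -/
lemma exists_dual_vec {K C : Type} [Field K] [AddCommGroup C] [Module K C]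
    {ι : Type} [Finite ι] (L : ι → C →ₗ[K] K) (hL : LinearIndependent K L) (j : ι) :
    ∃ m : C, L j m = 1 ∧ ∀ k, k ≠ j → L k m = 0 := by
  have h : ¬ (⨅ k : {k : ι // k ≠ j}, LinearMap.ker (L (k : ι))) ≤ LinearMap.ker (L j) := by
    intro h
    have hsp := mem_span_of_iInf_ker_le_ker (L := fun k : {k : ι // k ≠ j} => L (k : ι)) h
    have hrange : Set.range (fun k : {k : ι // k ≠ j} => L (k : ι)) = L '' {k | k ≠ j} := by
      ext f
      constructor
      · rintro ⟨⟨k, hk⟩, rfl⟩; exact ⟨k, hk, rfl⟩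
      · rintro ⟨k, hk, rfl⟩; exact ⟨⟨k, hk⟩, rfl⟩
    rw [hrange] at hsp
    exact hL.notMem_span_image (s := {k | k ≠ j}) (by simp) hsp
  obtain ⟨m, hm1, hm2⟩ := SetLike.not_le_iff_exists.1 h
  have hm2' : L j m ≠ 0 := hm2
  refine ⟨(L j m)⁻¹ • m, ?_, ?_⟩
  · simp [inv_mul_cancel₀ hm2']
  · intro k hk
    have : L k m = 0 := by
      have := Submodule.mem_iInf (fun k : {k : ι // k ≠ j} => LinearMap.ker (L (k : ι))) |>.1 hm1 ⟨k, hk⟩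
      exact this
    simp [this]

/-- The tensor product of two left-nondegenerate pairings is left-nondegenerate. -/
lemma binary_sep {K A B C D : Type} [Field K]
    [AddCommGroup A] [Module K A] [AddCommGroup B] [Module K B]
    [AddCommGroup C] [Module K C] [AddCommGroup D] [Module K D]
    (P : A →ₗ[K] B →ₗ[K] K) (Q : C →ₗ[K] D →ₗ[K] K)
    (hP : ∀ b : B, b ≠ 0 → ∃ a, P a b ≠ 0) (hQ : ∀ d : D, d ≠ 0 → ∃ c, Q c d ≠ 0)
    (Ψ : (A ⊗[K] C) →ₗ[K] (B ⊗[K] D) →ₗ[K] K)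
    (hΨ : ∀ (a : A) (c : C) (b : B) (d : D), Ψ (a ⊗ₜ c) (b ⊗ₜ d) = P a b * Q c d) :
    ∀ z : B ⊗[K] D, z ≠ 0 → ∃ w, Ψ w z ≠ 0 := by
  intro z hz
  classical
  set ιD := Module.Basis.ofVectorSpaceIndex K D
  set bD : Module.Basis ιD K D := Module.Basis.ofVectorSpace K D with hbD
  let ℰ : (B ⊗[K] D) ≃ₗ[K] (ιD →₀ B) :=
    (TensorProduct.congr (LinearEquiv.refl K B) bD.repr).trans
      (TensorProduct.finsuppScalarRight (R := K) (S := K) (M := B) (ι := ιD))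
  set f : ιD →₀ B := ℰ z with hf
  have hfz : f ≠ 0 := by
    intro h0
    apply hz
    have hez : ℰ z = 0 := by rw [← hf, h0]
    simpa using ℰ.map_eq_zero_iff.1 hez
  obtain ⟨e, he⟩ : ∃ e, f e ≠ 0 := by
    by_contra h
    push_neg at h
    exact hfz (Finsupp.ext h)
  have hes : e ∈ f.support := Finsupp.mem_support_iff.2 he
  -- flip Q is injective
  have hinj : Function.Injective Q.flip := by
    rw [← LinearMap.ker_eq_bot]
    apply (Submodule.eq_bot_iff _).2
    intro d hd
    by_contra hd0
    obtain ⟨c, hc⟩ := hQ d hd0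
    exact hc (by simpa using LinearMap.congr_fun (LinearMap.mem_ker.1 hd) c)
  -- dual vector in C
  have hLI : LinearIndependent K (fun e' : f.support => Q.flip (bD (e' : ιD))) := by
    have := (bD.linearIndependent.comp (fun e' : f.support => (e' : ιD)) Subtype.val_injective)
    exact this.map' Q.flip (LinearMap.ker_eq_bot.2 hinj)
  obtain ⟨c0, hc0e, hc0ne⟩ := exists_dual_vec _ hLI ⟨e, hes⟩
  obtain ⟨a, ha⟩ := hP (f e) he
  refine ⟨a ⊗ₜ c0, ?_⟩
  -- compute Ψ (a ⊗ c0) z via ℰ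
  have key : (Ψ (a ⊗ₜ c0)).comp (ℰ.symm : (ιD →₀ B) →ₗ[K] B ⊗[K] D)
      = Finsupp.lsum K (fun e' : ιD => Q c0 (bD e') • (P a)) := by
    apply Finsupp.lhom_ext
    intro e' b
    have hsymm : ℰ.symm (Finsupp.single e' b) = b ⊗ₜ bD e' := by
      rw [LinearEquiv.symm_apply_eq, LinearEquiv.trans_apply, TensorProduct.congr_tmul]
      ext j
      simp [TensorProduct.finsuppScalarRight_apply_tmul_apply, Finsupp.single_apply, bD.repr_self]
    simp only [LinearMap.comp_apply, LinearEquiv.coe_coe, hsymm, hΨ, Finsupp.lsum_single,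
      LinearMap.smul_apply, smul_eq_mul]
    ring
  have hval : Ψ (a ⊗ₜ c0) z = f.sum fun e' b => Q c0 (bD e') * P a b := by
    have := LinearMap.congr_fun key f
    simp only [LinearMap.comp_apply, LinearEquiv.coe_coe, hf] at this ⊢
    rw [ℰ.symm_apply_apply] at this
    rw [this]
    simp [Finsupp.lsum_apply, Finsupp.sum, smul_eq_mul]
  rw [hval]
  rw [Finsupp.sum]
  rw [Finset.sum_eq_single e]
  · have h1 : Q c0 (bD e) = 1 := hc0e
    rw [h1, one_mul]
    exact ha
  · intro e' he' hne
    have : Q c0 (bD e') = 0 := hc0ne ⟨e', he'⟩ (by simpa [Subtype.ext_iff] using hne)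
    rw [this, zero_mul]
  · intro h
    exact absurd hes h

variable {K M N : Type} [Field K] [AddCommGroup M] [Module K M] [AddCommGroup N] [Module K N]

noncomputable def tpPairing (φ1 : M →ₗ[K] N →ₗ[K] K) (i : ℕ) :
    (⨂[K] (_ : Fin i), M) →ₗ[K] (⨂[K] (_ : Fin i), N) →ₗ[K] K :=
  (PiTensorProduct.map₂ (fun _ : Fin i => φ1)).compr₂
    (PiTensorProduct.lift (MultilinearMap.mkPiAlgebra K (Fin i) K))

lemma tpPairing_tprod (φ1 : M →ₗ[K] N →ₗ[K] K) (i : ℕ) (m : Fin i → M) (n : Fin i → N) :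
    tpPairing φ1 i (tprod K m) (tprod K n) = ∏ r : Fin i, φ1 (m r) (n r) := by
  simp [tpPairing, PiTensorProduct.map₂_tprod_tprod]

noncomputable def snocEquiv (K V : Type) [Field K] [AddCommGroup V] [Module K V] (i : ℕ) :
    ((⨂[K] (_ : Fin i), V) ⊗[K] V) ≃ₗ[K] ⨂[K] (_ : Fin (i + 1)), V :=
  (TensorProduct.congr (LinearEquiv.refl K _)
      (PiTensorProduct.subsingletonEquiv (0 : Fin 1) (s := fun _ => V) (R := K)).symm).trans <|
    (PiTensorProduct.tmulEquiv K V).trans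
      (PiTensorProduct.reindex K (fun _ : Fin i ⊕ Fin 1 => V) finSumFinEquiv)

lemma snocEquiv_tprod (K V : Type) [Field K] [AddCommGroup V] [Module K V] (i : ℕ)
    (a : Fin i → V) (v : V) :
    snocEquiv K V i ((PiTensorProduct.tprod K a) ⊗ₜ v) = PiTensorProduct.tprod K (Fin.snoc a v) := by
  have h1 : (PiTensorProduct.subsingletonEquiv (0 : Fin 1) (s := fun _ => V) (R := K)).symm v
      = PiTensorProduct.tprod K (fun _ : Fin 1 => v) := by
    rw [LinearEquiv.symm_apply_eq, PiTensorProduct.subsingletonEquiv_apply_tprod]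
  rw [snocEquiv, LinearEquiv.trans_apply, LinearEquiv.trans_apply, TensorProduct.congr_tmul,
    LinearEquiv.refl_apply, h1, PiTensorProduct.tmulEquiv_apply, PiTensorProduct.reindex_tprod]
  congr 1
  funext r
  refine Fin.lastCases ?_ ?_ r
  · have : finSumFinEquiv.symm (Fin.last i) = Sum.inr (0 : Fin 1) := by
      rw [Equiv.symm_apply_eq]
      simp [finSumFinEquiv_apply_right]
      ext
      simp
    simp [this, Fin.snoc_last]
  · intro k
    have : finSumFinEquiv.symm (Fin.castSucc k) = Sum.inl k := by
      rw [Equiv.symm_apply_eq]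
      simp [finSumFinEquiv_apply_left]
      rfl
    simp [this, Fin.snoc_castSucc]

lemma tpPairing_sep (φ1 : M →ₗ[K] N →ₗ[K] K)
    (hnd : ∀ y : N, y ≠ 0 → ∃ x : M, φ1 x y ≠ 0) :
    ∀ i, ∀ y : ⨂[K] (_ : Fin i), N, y ≠ 0 → ∃ x, tpPairing φ1 i x y ≠ 0 := by
  intro i
  induction i with
  | zero =>
    intro y hy
    refine ⟨PiTensorProduct.tprod K (fun r : Fin 0 => r.elim0), ?_⟩
    have heq : tpPairing φ1 0 (PiTensorProduct.tprod K (fun r : Fin 0 => r.elim0))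
        = (PiTensorProduct.isEmptyEquiv (Fin 0)).toLinearMap := by
      ext n
      simp [tpPairing_tprod]
    rw [heq]
    simpa using (PiTensorProduct.isEmptyEquiv (Fin 0)).map_eq_zero_iff.not.2 hy
  | succ i IH =>
    intro y hy
    set EM := snocEquiv K M i with hEM
    set EN := snocEquiv K N i with hEN
    set Ψ := ((tpPairing φ1 (i + 1)).comp EM.toLinearMap).compl₂ EN.toLinearMap with hΨdef
    have hΨ : ∀ (u : ⨂[K] (_ : Fin i), M) (c : M) (v : ⨂[K] (_ : Fin i), N) (d : N),
        Ψ (u ⊗ₜ c) (v ⊗ₜ d) = tpPairing φ1 i u v * φ1 c d := by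
      intro u c v d
      have hmaps : ((Ψ.comp ((TensorProduct.mk K (⨂[K] (_ : Fin i), M) M).flip c)).compl₂
            ((TensorProduct.mk K (⨂[K] (_ : Fin i), N) N).flip d))
          = (φ1 c d) • tpPairing φ1 i := by
        ext m n
        simp only [LinearMap.compMultilinearMap_apply, LinearMap.compl₂_apply,
          LinearMap.comp_apply, TensorProduct.mk_apply, LinearMap.flip_apply,
          LinearMap.smul_apply, smul_eq_mul, hΨdef, LinearEquiv.coe_coe]
        rw [snocEquiv_tprod, snocEquiv_tprod, tpPairing_tprod, tpPairing_tprod]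
        have hfun : (fun r : Fin (i + 1) =>
              φ1 ((Fin.snoc m c : Fin (i + 1) → M) r) ((Fin.snoc n d : Fin (i + 1) → N) r))
            = (Fin.snoc (fun r : Fin i => φ1 (m r) (n r)) (φ1 c d) : Fin (i + 1) → K) := by
          funext r
          refine Fin.lastCases ?_ ?_ r <;> simp
        rw [hfun, Fin.prod_snoc]
        ring
      have h2 := LinearMap.congr_fun (LinearMap.congr_fun hmaps u) v
      simp only [LinearMap.compl₂_apply, LinearMap.comp_apply, TensorProduct.mk_apply,
        LinearMap.flip_apply, LinearMap.smul_apply, smul_eq_mul] at h2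
      rw [h2]; ring
    obtain ⟨w, hw⟩ := binary_sep (tpPairing φ1 i) φ1 IH hnd Ψ hΨ (EN.symm y)
      (by
        intro h0
        apply hy
        have : y = EN (EN.symm y) := (EN.apply_symm_apply y).symm
        rw [this, h0, map_zero])
    refine ⟨EM w, ?_⟩
    have : Ψ w (EN.symm y) = tpPairing φ1 (i + 1) (EM w) y := by
      simp only [hΨdef, LinearMap.compl₂_apply, LinearMap.comp_apply, LinearEquiv.coe_coe,
        EN.apply_symm_apply]
    rwa [this] at hw

end Aux

/-- Let `φ₁ : M × N → K` be a left non-degenerate bilinear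
map of `K`-vector spaces.  For each `i ≥ 1`, the induced bilinear map
`φ₁^{⊗i} : M^{⊗i} × N^{⊗i} → K`,
`φ₁^{⊗i}(m¹ ⊗ ⋯ ⊗ mⁱ, n¹ ⊗ ⋯ ⊗ nⁱ) = ∏ᵣ φ₁(mʳ, nʳ)`, exists and is left
non-degenerate. -/
theorem tensor_power_pairing_nondeg (M N : Type)
    [AddCommGroup M] [Module K M] [AddCommGroup N] [Module K N]
    (φ1 : M →ₗ[K] N →ₗ[K] K)
    (hnd : ∀ y : N, y ≠ 0 → ∃ x : M, φ1 x y ≠ 0)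
    (i : ℕ) (hi : 1 ≤ i) :
    (∃ Φ : (⨂[K] (_ : Fin i), M) →ₗ[K] (⨂[K] (_ : Fin i), N) →ₗ[K] K,
      ∀ (m : Fin i → M) (n : Fin i → N),
        Φ (PiTensorProduct.tprod K m) (PiTensorProduct.tprod K n)
          = ∏ r : Fin i, φ1 (m r) (n r)) ∧
    (∀ Φ : (⨂[K] (_ : Fin i), M) →ₗ[K] (⨂[K] (_ : Fin i), N) →ₗ[K] K,
      (∀ (m : Fin i → M) (n : Fin i → N),
        Φ (PiTensorProduct.tprod K m) (PiTensorProduct.tprod K n)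
          = ∏ r : Fin i, φ1 (m r) (n r)) →
      ∀ y : ⨂[K] (_ : Fin i), N, y ≠ 0 → ∃ x : ⨂[K] (_ : Fin i), M, Φ x y ≠ 0) := by
  constructor
  · exact ⟨tpPairing φ1 i, tpPairing_tprod φ1 i⟩
  · intro Φ hΦ y hy
    have hΦeq : Φ = tpPairing φ1 i := by
      ext m n
      rw [LinearMap.compMultilinearMap_apply] at *
      simpa [tpPairing_tprod] using hΦ m n
    rw [hΦeq]
    exact tpPairing_sep φ1 hnd i y hy
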